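/- Let d ≥ K ≥ 2, n ≥ 1, N = Kn, and τ > 0. For (W,H) ∈ OB(d,K) × OB(d,N), equality f(W,H) = log(1 + (K−1)·exp(−Kτ/(K−1))) holds if and only if (W,H) satisfies the neural collapse conditions (NC1), (NC2), and (NC3). -/

import Mathlib

open scoped BigOperators Matrix

/-- Cross-entropy loss: `L_CE(z,k) = log (∑_ℓ exp (z_ℓ)) − z_k`. -/
noncomputable def LCE {K : ℕ} (z : Fin K → ℝ) (k : Fin K) : ℝ :=
  Real.log (∑ ℓ, Real.exp (z ℓ)) - z k

/-- The oblique manifold: matrices all of whose columns have unit Euclidean norm. -/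
def OB (p : ℕ) (ι : Type) [Fintype ι] : Set (Matrix (Fin p) ι ℝ) :=
  {M | ∀ j, ∑ i, (M i j) ^ 2 = 1}

/-- The cross-entropy risk `f(W,H) = (1/N) ∑_k ∑_i L_CE(τ Wᵀ h_{k,i}, k)` with `N = K n`. -/
noncomputable def ceRisk {d K n : ℕ} (τ : ℝ) (W : Matrix (Fin d) (Fin K) ℝ)
    (H : Matrix (Fin d) (Fin K × Fin n) ℝ) : ℝ :=
  (1 / ((K : ℝ) * n)) * ∑ k : Fin K, ∑ i : Fin n,
    LCE (fun ℓ => τ * ∑ r, W r ℓ * H r (k, i)) k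

/-- Class-mean matrix: the `k`-th column is `h̄_k = (1/n) ∑_i h_{k,i}`. -/
noncomputable def hbar {d K n : ℕ} (H : Matrix (Fin d) (Fin K × Fin n) ℝ) :
    Matrix (Fin d) (Fin K) ℝ :=
  fun r k => (1 / (n : ℝ)) * ∑ i, H r (k, i)

/-- The neural collapse conditions (NC1), (NC2), (NC3). -/
noncomputable def NeuralCollapse {d K n : ℕ} (W : Matrix (Fin d) (Fin K) ℝ)
    (H : Matrix (Fin d) (Fin K × Fin n) ℝ) : Prop :=
  -- (NC1) variability collapse
  (∀ k i r, H r (k, i) = hbar H r k) ∧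
  -- (NC2) convergence to simplex ETF
  (hbar H ∈ OB d (Fin K) ∧
    (hbar H)ᵀ * hbar H =
      ((K : ℝ) - 1)⁻¹ •
        ((K : ℝ) • (1 : Matrix (Fin K) (Fin K) ℝ) - Matrix.of fun _ _ => (1 : ℝ))) ∧
  -- (NC3) convergence to self-duality
  (∀ r k, W r k = hbar H r k)


open Real Finset

namespace NCaux
lemma exp_fact (x s : ℝ) : Real.exp x = Real.exp s * Real.exp (x - s) := by
  rw [← Real.exp_add]; ring_nf

lemma tangent_slack (x s : ℝ) : 0 ≤ Real.exp x - Real.exp s * (1 + (x - s)) := by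
  have h := Real.add_one_le_exp (x - s)
  have h3 := exp_fact x s
  nlinarith [Real.exp_pos s]

lemma tangent_eq {x s : ℝ} (h : Real.exp x - Real.exp s * (1 + (x - s)) = 0) : x = s := by
  by_contra hne
  have h1 : x - s ≠ 0 := sub_ne_zero.mpr hne
  have h2 := Real.add_one_lt_exp h1
  have h3 := exp_fact x s
  nlinarith [Real.exp_pos s]

lemma key_lemma (K : ℕ) (hK : 2 ≤ K) (t₀ : ℝ) (v : Fin K → ℝ) (k : Fin K) (hvk : v k = 0) :
    Real.log (1 + ((K:ℝ)-1) * Real.exp t₀)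
        + (((K:ℝ)-1) * Real.exp t₀ / (1 + ((K:ℝ)-1) * Real.exp t₀))
          * ((∑ ℓ, v ℓ) / ((K:ℝ)-1) - t₀)
      ≤ Real.log (∑ ℓ, Real.exp (v ℓ))
    ∧ (Real.log (∑ ℓ, Real.exp (v ℓ))
        = Real.log (1 + ((K:ℝ)-1) * Real.exp t₀)
          + (((K:ℝ)-1) * Real.exp t₀ / (1 + ((K:ℝ)-1) * Real.exp t₀))
            * ((∑ ℓ, v ℓ) / ((K:ℝ)-1) - t₀)
        → ∀ ℓ, ℓ ≠ k → v ℓ = t₀) := by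
  have hA : (0:ℝ) < (K:ℝ) - 1 := by
    have h2 : (2:ℝ) ≤ (K:ℝ) := by exact_mod_cast hK
    linarith
  set A : ℝ := (K:ℝ) - 1 with hAdef
  set b : ℝ := A * Real.exp t₀ with hbdef
  have hb : 0 < b := mul_pos hA (Real.exp_pos _)
  have hb1 : 0 < 1 + b := by linarith
  set c : ℝ := b / (1 + b) with hcdef
  have hc : c * (1 + b) = b := div_mul_cancel₀ _ (ne_of_gt hb1)
  set t : ℝ := (∑ ℓ, v ℓ) / A with htdef
  have hAt : A * t = ∑ ℓ, v ℓ := by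
    rw [htdef]; field_simp
  set q : ℝ := c * (t - t₀) with hqdef
  have hcard : ((univ.erase k).card : ℝ) = A := by
    rw [Finset.card_erase_of_mem (mem_univ k), Finset.card_univ, Fintype.card_fin]
    rw [hAdef]
    have : 1 ≤ K := by omega
    push_cast [this]
    ring
  have hsum_split : ∑ ℓ, Real.exp (v ℓ) = 1 + ∑ ℓ ∈ univ.erase k, Real.exp (v ℓ) := by
    rw [← Finset.sum_erase_add univ _ (mem_univ k), hvk, Real.exp_zero]; ring
  have hvsum : ∑ ℓ ∈ univ.erase k, v ℓ = A * t := by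
    have := Finset.sum_erase_add univ v (mem_univ k)
    rw [hvk] at this
    rw [hAt]; linarith [this]
  have hID : (∑ ℓ, Real.exp (v ℓ)) - (1 + b) * Real.exp q
      = (Real.exp 0 - Real.exp q * (1 + (0 - q)))
        + ∑ ℓ ∈ univ.erase k, (Real.exp (v ℓ) - Real.exp (t₀ + q) * (1 + (v ℓ - (t₀ + q)))) := by
    rw [hsum_split, Finset.sum_sub_distrib, ← Finset.mul_sum]
    have hinner : ∑ ℓ ∈ univ.erase k, (1 + (v ℓ - (t₀ + q)))
        = A * (1 - (t₀ + q)) + A * t := by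
      rw [Finset.sum_add_distrib, Finset.sum_sub_distrib, hvsum, Finset.sum_const,
        Finset.sum_const, nsmul_eq_mul, nsmul_eq_mul, hcard]
      ring
    rw [hinner, Real.exp_add, Real.exp_zero]
    linear_combination (-(Real.exp q * (t - t₀))) * hc
      + (-(Real.exp q * (1 - t₀ - q + t))) * hbdef
      + (-(Real.exp q * (1 + b))) * hqdef
  have hterm0 : 0 ≤ Real.exp 0 - Real.exp q * (1 + (0 - q)) := tangent_slack 0 q
  have htermℓ : ∀ ℓ ∈ univ.erase k,
      0 ≤ Real.exp (v ℓ) - Real.exp (t₀ + q) * (1 + (v ℓ - (t₀ + q))) :=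
    fun ℓ _ => tangent_slack _ _
  have hsum_nonneg : 0 ≤ ∑ ℓ ∈ univ.erase k,
      (Real.exp (v ℓ) - Real.exp (t₀ + q) * (1 + (v ℓ - (t₀ + q)))) :=
    Finset.sum_nonneg htermℓ
  have hmain : (1 + b) * Real.exp q ≤ ∑ ℓ, Real.exp (v ℓ) := by linarith [hID, hterm0, hsum_nonneg]
  have hpos2 : 0 < (1 + b) * Real.exp q := mul_pos hb1 (Real.exp_pos _)
  have hlog2 : Real.log ((1 + b) * Real.exp q) = Real.log (1 + b) + q := by
    rw [Real.log_mul (ne_of_gt hb1) (ne_of_gt (Real.exp_pos _)), Real.log_exp]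
  constructor
  · have h := Real.log_le_log hpos2 hmain
    rw [hlog2] at h
    linarith
  · intro heq ℓ hℓ
    have hEq : ∑ ℓ, Real.exp (v ℓ) = (1 + b) * Real.exp q := by
      have hposL : 0 < ∑ ℓ, Real.exp (v ℓ) :=
        lt_of_lt_of_le hpos2 hmain
      have : Real.log (∑ ℓ, Real.exp (v ℓ)) = Real.log ((1 + b) * Real.exp q) := by
        rw [hlog2]; exact heq
      have := congrArg Real.exp this
      rwa [Real.exp_log hposL, Real.exp_log hpos2] at this
    have hzero : (Real.exp 0 - Real.exp q * (1 + (0 - q)))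
        + ∑ ℓ ∈ univ.erase k, (Real.exp (v ℓ) - Real.exp (t₀ + q) * (1 + (v ℓ - (t₀ + q)))) = 0 := by
      rw [← hID, hEq]; ring
    have h0 : Real.exp 0 - Real.exp q * (1 + (0 - q)) = 0 := by linarith
    have hq0 : q = 0 := (tangent_eq h0).symm
    have hS0 : ∑ ℓ ∈ univ.erase k, (Real.exp (v ℓ) - Real.exp (t₀ + q) * (1 + (v ℓ - (t₀ + q)))) = 0 := by
      linarith
    have heach := (Finset.sum_eq_zero_iff_of_nonneg htermℓ).mp hS0
    have := heach ℓ (Finset.mem_erase.mpr ⟨hℓ, mem_univ ℓ⟩)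
    have hv := tangent_eq this
    rw [hq0] at hv
    simpa using hv



variable {d K n : ℕ}

def svec (W : Matrix (Fin d) (Fin K) ℝ) (r : Fin d) : ℝ := ∑ ℓ, W r ℓ

noncomputable def zfun (τ : ℝ) (W : Matrix (Fin d) (Fin K) ℝ)
    (H : Matrix (Fin d) (Fin K × Fin n) ℝ) (k : Fin K) (i : Fin n) : Fin K → ℝ :=
  fun ℓ => τ * ∑ r, W r ℓ * H r (k, i)

noncomputable def vfun (τ : ℝ) (W : Matrix (Fin d) (Fin K) ℝ)
    (H : Matrix (Fin d) (Fin K × Fin n) ℝ) (k : Fin K) (i : Fin n) : Fin K → ℝ :=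
  fun ℓ => zfun τ W H k i ℓ - zfun τ W H k i k

noncomputable def tfun (τ : ℝ) (W : Matrix (Fin d) (Fin K) ℝ)
    (H : Matrix (Fin d) (Fin K × Fin n) ℝ) (k : Fin K) (i : Fin n) : ℝ :=
  (∑ ℓ, vfun τ W H k i ℓ) / ((K:ℝ) - 1)

noncomputable def t0 (K : ℕ) (τ : ℝ) : ℝ := -((K:ℝ) * τ) / ((K:ℝ) - 1)
noncomputable def bc (K : ℕ) (τ : ℝ) : ℝ := ((K:ℝ) - 1) * Real.exp (t0 K τ)
noncomputable def cc (K : ℕ) (τ : ℝ) : ℝ := bc K τ / (1 + bc K τ)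
noncomputable def Ls (K : ℕ) (τ : ℝ) : ℝ := Real.log (1 + bc K τ)

noncomputable def Efun (τ : ℝ) (W : Matrix (Fin d) (Fin K) ℝ)
    (H : Matrix (Fin d) (Fin K × Fin n) ℝ) (k : Fin K) (i : Fin n) : ℝ :=
  LCE (zfun τ W H k i) k - Ls K τ - cc K τ * (tfun τ W H k i - t0 K τ)

noncomputable def Dfun (W : Matrix (Fin d) (Fin K) ℝ)
    (H : Matrix (Fin d) (Fin K × Fin n) ℝ) (k : Fin K) (i : Fin n) : ℝ :=
  ∑ r, ((K:ℝ) * W r k - svec W r - (K:ℝ) * H r (k, i))^2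

lemma sum_z (τ : ℝ) (W : Matrix (Fin d) (Fin K) ℝ) (H : Matrix (Fin d) (Fin K × Fin n) ℝ)
    (k : Fin K) (i : Fin n) :
    ∑ ℓ, zfun τ W H k i ℓ = τ * ∑ r, svec W r * H r (k, i) := by
  unfold zfun svec
  rw [← Finset.mul_sum, Finset.sum_comm]
  congr 1
  exact Finset.sum_congr rfl fun r _ => (Finset.sum_mul _ _ _).symm

lemma tfun_eq (τ : ℝ) (W : Matrix (Fin d) (Fin K) ℝ) (H : Matrix (Fin d) (Fin K × Fin n) ℝ)
    (k : Fin K) (i : Fin n) :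
    tfun τ W H k i = (τ * (∑ r, svec W r * H r (k, i))
      - (K:ℝ) * (τ * ∑ r, W r k * H r (k, i))) / ((K:ℝ) - 1) := by
  unfold tfun
  congr 1
  rw [show (∑ ℓ, vfun τ W H k i ℓ) = (∑ ℓ, zfun τ W H k i ℓ) - (K:ℝ) * zfun τ W H k i k by
    unfold vfun
    rw [Finset.sum_sub_distrib, Finset.sum_const, Finset.card_univ, Fintype.card_fin,
      nsmul_eq_mul]]
  rw [sum_z]
  rfl

lemma Dfun_eq (W : Matrix (Fin d) (Fin K) ℝ) (H : Matrix (Fin d) (Fin K × Fin n) ℝ)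
    (hH : ∀ j, ∑ r, (H r j)^2 = 1) (k : Fin K) (i : Fin n) :
    Dfun W H k i = (∑ r, ((K:ℝ) * W r k - svec W r)^2)
      + 2*(K:ℝ)*(∑ r, svec W r * H r (k, i))
      - 2*(K:ℝ)^2*(∑ r, W r k * H r (k, i)) + (K:ℝ)^2 := by
  unfold Dfun
  have expand : ∀ r, ((K:ℝ) * W r k - svec W r - (K:ℝ) * H r (k, i))^2
      = ((K:ℝ) * W r k - svec W r)^2 + 2*(K:ℝ)*(svec W r * H r (k, i))
        - 2*(K:ℝ)^2*(W r k * H r (k, i)) + (K:ℝ)^2 * (H r (k, i))^2 := fun r => by ring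
  rw [Finset.sum_congr rfl fun r _ => expand r]
  rw [Finset.sum_add_distrib, Finset.sum_sub_distrib, Finset.sum_add_distrib,
    ← Finset.mul_sum, ← Finset.mul_sum, ← Finset.mul_sum, hH (k, i)]
  ring

lemma Psum (W : Matrix (Fin d) (Fin K) ℝ) (hW : ∀ j, ∑ r, (W r j)^2 = 1) :
    ∑ k, ∑ r, ((K:ℝ) * W r k - svec W r)^2
      = (K:ℝ)^3 - (K:ℝ) * ∑ r, (svec W r)^2 := by
  have expand : ∀ (k : Fin K) (r : Fin d), ((K:ℝ) * W r k - svec W r)^2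
      = (K:ℝ)^2 * (W r k)^2 - 2*(K:ℝ)*(W r k * svec W r) + (svec W r)^2 := fun k r => by ring
  have h1 : ∀ k : Fin K, ∑ r, ((K:ℝ) * W r k - svec W r)^2
      = (K:ℝ)^2 - 2*(K:ℝ)*(∑ r, W r k * svec W r) + ∑ r, (svec W r)^2 := by
    intro k
    rw [Finset.sum_congr rfl fun r _ => expand k r]
    rw [Finset.sum_add_distrib, Finset.sum_sub_distrib, ← Finset.mul_sum, ← Finset.mul_sum,
      hW k]
    ring
  rw [Finset.sum_congr rfl fun k _ => h1 k]
  have h2 : ∑ k : Fin K, ∑ r, W r k * svec W r = ∑ r, (svec W r)^2 := by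
    rw [Finset.sum_comm]
    refine Finset.sum_congr rfl fun r _ => ?_
    rw [← Finset.sum_mul]
    unfold svec
    ring
  rw [Finset.sum_add_distrib, Finset.sum_sub_distrib, ← Finset.mul_sum, h2,
    Finset.sum_const, Finset.sum_const, Finset.card_univ, Fintype.card_fin,
    nsmul_eq_mul, nsmul_eq_mul]
  ring

lemma sum_tfun_eq (hK : 2 ≤ K) (τ : ℝ)
    (W : Matrix (Fin d) (Fin K) ℝ) (H : Matrix (Fin d) (Fin K × Fin n) ℝ)
    (hW : ∀ j, ∑ r, (W r j)^2 = 1) (hH : ∀ j, ∑ r, (H r j)^2 = 1) :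
    ∑ k, ∑ i, tfun τ W H k i
      = (K:ℝ) * n * t0 K τ
        + (τ / ((K:ℝ) - 1)) * ((1/(2*(K:ℝ))) * (∑ k, ∑ i, Dfun W H k i)
          + ((n:ℝ)/2) * ∑ r, (svec W r)^2) := by
  have hKR : (2:ℝ) ≤ (K:ℝ) := by exact_mod_cast hK
  have hA : ((K:ℝ) - 1) ≠ 0 := by linarith
  have hK0 : (K:ℝ) ≠ 0 := by linarith
  set S1 : ℝ := ∑ k, ∑ i : Fin n, ∑ r, svec W r * H r (k, i) with hS1
  set S2 : ℝ := ∑ k, ∑ i : Fin n, ∑ r, W r k * H r (k, i) with hS2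
  set Q : ℝ := ∑ r, (svec W r)^2 with hQ
  have h_t : ∑ k, ∑ i, tfun τ W H k i = (τ * S1 - (K:ℝ) * (τ * S2)) / ((K:ℝ) - 1) := by
    rw [Finset.sum_congr rfl fun k (_ : k ∈ univ) =>
      Finset.sum_congr rfl fun i (_ : i ∈ univ) => tfun_eq τ W H k i]
    rw [hS1, hS2]
    simp only [← Finset.sum_div, Finset.sum_sub_distrib, ← Finset.mul_sum]
  have h_D : ∑ k, ∑ i, Dfun W H k i
      = (n:ℝ) * ((K:ℝ)^3 - (K:ℝ)*Q) + 2*(K:ℝ)*S1 - 2*(K:ℝ)^2*S2 + (K:ℝ)^2*((K:ℝ)*n) := by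
    rw [Finset.sum_congr rfl fun k (_ : k ∈ univ) =>
      Finset.sum_congr rfl fun i (_ : i ∈ univ) => Dfun_eq W H hH k i]
    rw [hS1, hS2]
    simp only [Finset.sum_add_distrib, Finset.sum_sub_distrib, Finset.sum_const,
      Finset.card_univ, Fintype.card_fin, nsmul_eq_mul, ← Finset.mul_sum]
    rw [Psum W hW]
    rw [hQ]
    ring
  rw [h_t, h_D]
  unfold t0
  field_simp
  ring

lemma LCE_eq (τ : ℝ) (W : Matrix (Fin d) (Fin K) ℝ) (H : Matrix (Fin d) (Fin K × Fin n) ℝ)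
    (k : Fin K) (i : Fin n) :
    LCE (zfun τ W H k i) k = Real.log (∑ ℓ, Real.exp (vfun τ W H k i ℓ)) := by
  unfold LCE vfun
  have hfac : ∀ ℓ : Fin K, Real.exp (zfun τ W H k i ℓ)
      = Real.exp (zfun τ W H k i k) * Real.exp (zfun τ W H k i ℓ - zfun τ W H k i k) :=
    fun ℓ => exp_fact _ _
  have hpos : 0 < ∑ ℓ, Real.exp (zfun τ W H k i ℓ - zfun τ W H k i k) :=
    Finset.sum_pos (fun _ _ => Real.exp_pos _) ⟨k, Finset.mem_univ k⟩
  rw [Finset.sum_congr rfl fun ℓ (_ : ℓ ∈ univ) => hfac ℓ, ← Finset.mul_sum,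
    Real.log_mul (ne_of_gt (Real.exp_pos _)) (ne_of_gt hpos), Real.log_exp]
  ring

lemma Efun_key (hK : 2 ≤ K) (τ : ℝ) (W : Matrix (Fin d) (Fin K) ℝ)
    (H : Matrix (Fin d) (Fin K × Fin n) ℝ) (k : Fin K) (i : Fin n) :
    0 ≤ Efun τ W H k i ∧
      (Efun τ W H k i = 0 → ∀ ℓ, ℓ ≠ k → vfun τ W H k i ℓ = t0 K τ) := by
  have hvk : vfun τ W H k i k = 0 := sub_self _
  have hk := key_lemma K hK (t0 K τ) (vfun τ W H k i) k hvk
  have hL := LCE_eq τ W H k i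
  constructor
  · have h1 := hk.1
    unfold Efun Ls cc bc tfun
    rw [hL]
    linarith
  · intro h0 ℓ hℓ
    refine hk.2 ?_ ℓ hℓ
    unfold Efun Ls cc bc tfun at h0
    rw [hL] at h0
    linarith


lemma ceRisk_decomp (hK : 2 ≤ K) (hn : 1 ≤ n) (τ : ℝ)
    (W : Matrix (Fin d) (Fin K) ℝ) (H : Matrix (Fin d) (Fin K × Fin n) ℝ)
    (hW : ∀ j, ∑ r, (W r j)^2 = 1) (hH : ∀ j, ∑ r, (H r j)^2 = 1) :
    ceRisk τ W H = Ls K τ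
      + (1/((K:ℝ)*n)) * (∑ k, ∑ i, Efun τ W H k i)
      + (cc K τ * τ / (((K:ℝ)-1) * ((K:ℝ)*n)))
        * ((1/(2*(K:ℝ))) * (∑ k, ∑ i, Dfun W H k i) + ((n:ℝ)/2) * ∑ r, (svec W r)^2) := by
  have hKR : (2:ℝ) ≤ (K:ℝ) := by exact_mod_cast hK
  have hnR : (1:ℝ) ≤ (n:ℝ) := by exact_mod_cast hn
  have hA : ((K:ℝ) - 1) ≠ 0 := by linarith
  have hKn : ((K:ℝ)*(n:ℝ)) ≠ 0 := by nlinarith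
  have hsplit : ∀ (k : Fin K) (i : Fin n), LCE (zfun τ W H k i) k
      = Efun τ W H k i + Ls K τ + cc K τ * (tfun τ W H k i - t0 K τ) := by
    intro k i; unfold Efun; ring
  have hsum : ∑ k, ∑ i, LCE (zfun τ W H k i) k
      = (∑ k, ∑ i, Efun τ W H k i) + ((K:ℝ)*n) * Ls K τ
        + cc K τ * ((∑ k, ∑ i, tfun τ W H k i) - (K:ℝ)*n*(t0 K τ)) := by
    rw [Finset.sum_congr rfl fun k (_ : k ∈ univ) =>
      Finset.sum_congr rfl fun i (_ : i ∈ univ) => hsplit k i]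
    simp only [Finset.sum_add_distrib, Finset.sum_const, Finset.card_univ,
      Fintype.card_fin, nsmul_eq_mul, ← Finset.mul_sum, Finset.sum_sub_distrib]
    ring
  have hz : ∀ (k : Fin K) (i : Fin n),
      LCE (fun ℓ => τ * ∑ r, W r ℓ * H r (k, i)) k = LCE (zfun τ W H k i) k :=
    fun _ _ => rfl
  unfold ceRisk
  rw [Finset.sum_congr rfl fun k (_ : k ∈ univ) =>
    Finset.sum_congr rfl fun i (_ : i ∈ univ) => hz k i]
  rw [hsum, sum_tfun_eq hK τ W H hW hH]
  field_simp
  ring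

end NCaux

open NCaux

set_option maxHeartbeats 1000000 in
theorem ceRisk_eq_lower_bound_iff_neural_collapse (d K n : ℕ) (hK : 2 ≤ K) (hdK : K ≤ d)
    (hn : 1 ≤ n) (τ : ℝ) (hτ : 0 < τ)
    (W : Matrix (Fin d) (Fin K) ℝ) (H : Matrix (Fin d) (Fin K × Fin n) ℝ)
    (hW : W ∈ OB d (Fin K)) (hH : H ∈ OB d (Fin K × Fin n)) :
    ceRisk τ W H
        = Real.log (1 + ((K : ℝ) - 1) * Real.exp (-((K : ℝ) * τ) / ((K : ℝ) - 1)))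
      ↔ NeuralCollapse W H := by
  have hW' : ∀ j, ∑ r, (W r j)^2 = 1 := hW
  have hH' : ∀ j, ∑ r, (H r j)^2 = 1 := hH
  have hKR : (2:ℝ) ≤ (K:ℝ) := by exact_mod_cast hK
  have hnR : (1:ℝ) ≤ (n:ℝ) := by exact_mod_cast hn
  have hApos : (0:ℝ) < (K:ℝ) - 1 := by linarith
  have hA : ((K:ℝ) - 1) ≠ 0 := ne_of_gt hApos
  have hK0 : (K:ℝ) ≠ 0 := by linarith
  have hn0 : (n:ℝ) ≠ 0 := by linarith
  have hKnpos : (0:ℝ) < (K:ℝ)*(n:ℝ) := by nlinarith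
  have hbc : 0 < bc K τ := mul_pos hApos (Real.exp_pos _)
  have hbc1 : (0:ℝ) < 1 + bc K τ := by linarith
  have hcc : 0 < cc K τ := div_pos hbc hbc1
  have hdec := ceRisk_decomp hK hn τ W H hW' hH'
  have hLsEq : Real.log (1 + ((K:ℝ) - 1) * Real.exp (-((K:ℝ) * τ) / ((K:ℝ) - 1)))
      = Ls K τ := rfl
  constructor
  · intro heq
    rw [hdec] at heq
    rw [hLsEq] at heq
    set SE := ∑ k, ∑ i, Efun τ W H k i with hSE
    set SD := ∑ k, ∑ i, Dfun W H k i with hSDdef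
    set Q := ∑ r, (svec W r)^2 with hQdef
    set κ := cc K τ * τ / (((K:ℝ)-1) * ((K:ℝ)*n)) with hκdef
    have hSEnn : 0 ≤ SE := Finset.sum_nonneg fun k _ =>
      Finset.sum_nonneg fun i _ => (Efun_key hK τ W H k i).1
    have hDnn : ∀ (k : Fin K) (i : Fin n), 0 ≤ Dfun W H k i := fun k i =>
      Finset.sum_nonneg fun r _ => sq_nonneg _
    have hSDnn : 0 ≤ SD := Finset.sum_nonneg fun k _ =>
      Finset.sum_nonneg fun i _ => hDnn k i
    have hQnn : 0 ≤ Q := Finset.sum_nonneg fun r _ => sq_nonneg _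
    have hκpos : 0 < κ := div_pos (mul_pos hcc hτ) (mul_pos hApos hKnpos)
    have hc1 : (0:ℝ) < 1/(2*(K:ℝ)) := by positivity
    have hc2 : (0:ℝ) < (n:ℝ)/2 := by positivity
    have hc3 : (0:ℝ) < 1/((K:ℝ)*n) := by positivity
    have hRnn : 0 ≤ (1/(2*(K:ℝ))) * SD + ((n:ℝ)/2) * Q :=
      add_nonneg (mul_nonneg hc1.le hSDnn) (mul_nonneg hc2.le hQnn)
    have h1nn : 0 ≤ (1/((K:ℝ)*n)) * SE := mul_nonneg hc3.le hSEnn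
    have h2nn : 0 ≤ κ * ((1/(2*(K:ℝ))) * SD + ((n:ℝ)/2) * Q) := mul_nonneg hκpos.le hRnn
    have hR0 : (1/(2*(K:ℝ))) * SD + ((n:ℝ)/2) * Q = 0 := by
      have h2 : κ * ((1/(2*(K:ℝ))) * SD + ((n:ℝ)/2) * Q) = 0 := by linarith
      rcases mul_eq_zero.mp h2 with h | h
      · exact absurd h (ne_of_gt hκpos)
      · exact h
    have hSE0 : SE = 0 := by
      have h1 : (1/((K:ℝ)*n)) * SE = 0 := by linarith
      rcases mul_eq_zero.mp h1 with h | h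
      · exact absurd h hc3.ne'
      · exact h
    have ha : (0:ℝ) ≤ (1/(2*(K:ℝ))) * SD := mul_nonneg hc1.le hSDnn
    have hb : (0:ℝ) ≤ ((n:ℝ)/2) * Q := mul_nonneg hc2.le hQnn
    have hSD0 : SD = 0 := by
      have h1 : (1/(2*(K:ℝ))) * SD = 0 := by linarith
      rcases mul_eq_zero.mp h1 with h | h
      · exact absurd h hc1.ne'
      · exact h
    have hQ0 : Q = 0 := by
      have h1 : ((n:ℝ)/2) * Q = 0 := by linarith
      rcases mul_eq_zero.mp h1 with h | h
      · exact absurd h hc2.ne'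
      · exact h
    have hE0 : ∀ (k : Fin K) (i : Fin n), Efun τ W H k i = 0 := by
      have h0 : ∑ k, ∑ i, Efun τ W H k i = 0 := by rw [← hSE]; exact hSE0
      intro k i
      have hk' := (Finset.sum_eq_zero_iff_of_nonneg
        (fun k' (_ : k' ∈ univ) => Finset.sum_nonneg fun i' _ =>
          (Efun_key hK τ W H k' i').1)).mp h0 k (mem_univ k)
      exact (Finset.sum_eq_zero_iff_of_nonneg
        (fun i' (_ : i' ∈ univ) => (Efun_key hK τ W H k i').1)).mp hk' i (mem_univ i)
    have hD0 : ∀ (k : Fin K) (i : Fin n), Dfun W H k i = 0 := by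
      have h0 : ∑ k, ∑ i, Dfun W H k i = 0 := by rw [← hSDdef]; exact hSD0
      intro k i
      have hk' := (Finset.sum_eq_zero_iff_of_nonneg
        (fun k' (_ : k' ∈ univ) => Finset.sum_nonneg fun i' _ => hDnn k' i')).mp
          h0 k (mem_univ k)
      exact (Finset.sum_eq_zero_iff_of_nonneg
        (fun i' (_ : i' ∈ univ) => hDnn k i')).mp hk' i (mem_univ i)
    have hsv : ∀ r, svec W r = 0 := by
      intro r
      have h0 : ∑ r, (svec W r)^2 = 0 := by rw [← hQdef]; exact hQ0
      have := (Finset.sum_eq_zero_iff_of_nonneg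
        (fun r' (_ : r' ∈ univ) => sq_nonneg (svec W r'))).mp h0 r (mem_univ r)
      exact pow_eq_zero_iff two_ne_zero |>.mp this
    have hHW : ∀ (k : Fin K) (i : Fin n) (r : Fin d), H r (k, i) = W r k := by
      intro k i r
      have h0 := hD0 k i
      unfold Dfun at h0
      have h1 := (Finset.sum_eq_zero_iff_of_nonneg
        (fun r' (_ : r' ∈ univ) => sq_nonneg _)).mp h0 r (mem_univ r)
      have h2 : (K:ℝ) * W r k - svec W r - (K:ℝ) * H r (k, i) = 0 :=
        pow_eq_zero_iff two_ne_zero |>.mp h1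
      rw [hsv r] at h2
      have h3 : (K:ℝ) * H r (k, i) = (K:ℝ) * W r k := by linarith
      exact mul_left_cancel₀ hK0 h3
    have hbarW : ∀ (r : Fin d) (k : Fin K), hbar H r k = W r k := by
      intro r k
      unfold hbar
      rw [Finset.sum_congr rfl fun i (_ : i ∈ univ) => hHW k i r, Finset.sum_const,
        Finset.card_univ, Fintype.card_fin, nsmul_eq_mul]
      field_simp
    have hGram_off : ∀ ℓ k : Fin K, ℓ ≠ k →
        ∑ r, W r ℓ * W r k = -(((K:ℝ) - 1)⁻¹) := by
      intro ℓ k hℓ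
      set i0 : Fin n := ⟨0, hn⟩ with hi0
      have hv := (Efun_key hK τ W H k i0).2 (hE0 k i0) ℓ hℓ
      unfold vfun zfun t0 at hv
      have e1 : ∑ r, W r ℓ * H r (k, i0) = ∑ r, W r ℓ * W r k :=
        Finset.sum_congr rfl fun r _ => by rw [hHW]
      have e2 : ∑ r, W r k * H r (k, i0) = 1 := by
        rw [Finset.sum_congr rfl fun r (_ : r ∈ univ) =>
          (by rw [hHW]; ring : W r k * H r (k, i0) = (W r k)^2), hW' k]
      rw [e1, e2] at hv
      have hτ0 : τ ≠ 0 := ne_of_gt hτ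
      have hv2 : (τ * (∑ r, W r ℓ * W r k) - τ * 1) * ((K:ℝ)-1) = -((K:ℝ)*τ) := by
        rw [hv]
        field_simp
      have hv3 : τ * ((∑ r, W r ℓ * W r k) * ((K:ℝ)-1)) = τ * (-1) := by ring_nf; ring_nf at hv2; linarith
      have hGA : (∑ r, W r ℓ * W r k) * ((K:ℝ)-1) = -1 := mul_left_cancel₀ hτ0 hv3
      field_simp
      linarith
    refine ⟨?_, ⟨?_, ?_⟩, ?_⟩
    · intro k i r
      rw [hbarW r k]
      exact hHW k i r
    · intro j
      rw [Finset.sum_congr rfl fun r (_ : r ∈ univ) =>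
        (by rw [hbarW] : (hbar H r j)^2 = (W r j)^2)]
      exact hW' j
    · apply Matrix.ext
      intro ℓ k
      rw [Matrix.mul_apply]
      simp only [Matrix.transpose_apply, Matrix.smul_apply, Matrix.sub_apply,
        Matrix.one_apply, Matrix.of_apply, smul_eq_mul]
      rw [Finset.sum_congr rfl fun r (_ : r ∈ univ) =>
        (by rw [hbarW r ℓ, hbarW r k] : hbar H r ℓ * hbar H r k = W r ℓ * W r k)]
      by_cases hlk : ℓ = k
      · subst hlk
        rw [if_pos rfl]
        rw [Finset.sum_congr rfl fun r (_ : r ∈ univ) =>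
          (by ring : W r ℓ * W r ℓ = (W r ℓ)^2), hW' ℓ]
        field_simp
      · rw [if_neg hlk, hGram_off ℓ k hlk]
        ring
    · intro r k
      exact (hbarW r k).symm
  · rintro ⟨hNC1, ⟨hOB, hGram⟩, hNC3⟩
    have hWH : ∀ (k : Fin K) (i : Fin n) (ℓ : Fin K), ∑ r, W r ℓ * H r (k, i)
        = ((K:ℝ)-1)⁻¹ * ((K:ℝ) * (if ℓ = k then 1 else 0) - 1) := by
      intro k i ℓ
      have h1 : ∑ r, W r ℓ * H r (k, i) = ((hbar H)ᵀ * hbar H) ℓ k := by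
        rw [Matrix.mul_apply]
        exact Finset.sum_congr rfl fun r _ => by
          rw [Matrix.transpose_apply, hNC3 r ℓ, hNC1 k i r]
      rw [h1, hGram]
      simp only [Matrix.smul_apply, Matrix.sub_apply, Matrix.one_apply,
        Matrix.of_apply, smul_eq_mul]
    have hLCEval : ∀ (k : Fin K) (i : Fin n),
        LCE (fun ℓ => τ * ∑ r, W r ℓ * H r (k, i)) k = Ls K τ := by
      intro k i
      unfold LCE
      have hzk : τ * ∑ r, W r k * H r (k, i) = τ := by
        rw [hWH k i k, if_pos rfl]
        field_simp
      have hzl : ∀ ℓ : Fin K, ℓ ≠ k → τ * ∑ r, W r ℓ * H r (k, i) = -τ/((K:ℝ)-1) := by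
        intro ℓ hℓ
        rw [hWH k i ℓ, if_neg hℓ]
        field_simp
        ring
      have hsum : ∑ ℓ, Real.exp (τ * ∑ r, W r ℓ * H r (k, i))
          = ((K:ℝ)-1) * Real.exp (-τ/((K:ℝ)-1)) + Real.exp τ := by
        rw [← Finset.sum_erase_add univ _ (mem_univ k), hzk]
        congr 1
        rw [Finset.sum_congr rfl fun ℓ hℓ => (by
            rw [hzl ℓ (Finset.mem_erase.mp hℓ).1] :
          Real.exp (τ * ∑ r, W r ℓ * H r (k, i)) = Real.exp (-τ/((K:ℝ)-1)))]
        rw [Finset.sum_const, Finset.card_erase_of_mem (mem_univ k), Finset.card_univ,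
          Fintype.card_fin, nsmul_eq_mul]
        have h1 : 1 ≤ K := by omega
        push_cast [h1]
        ring
      rw [hsum]
      have hfac : ((K:ℝ)-1) * Real.exp (-τ/((K:ℝ)-1)) + Real.exp τ
          = Real.exp τ * (1 + bc K τ) := by
        unfold bc t0
        have hadd : Real.exp τ * Real.exp (-((K:ℝ) * τ) / ((K:ℝ) - 1))
            = Real.exp (-τ/((K:ℝ)-1)) := by
          rw [← Real.exp_add]
          congr 1
          field_simp
          ring
        rw [mul_add, mul_one]
        rw [show Real.exp τ * (((K:ℝ)-1) * Real.exp (-((K:ℝ) * τ) / ((K:ℝ) - 1)))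
          = ((K:ℝ)-1) * (Real.exp τ * Real.exp (-((K:ℝ) * τ) / ((K:ℝ) - 1))) from by ring]
        rw [hadd]
        ring
      rw [hfac, Real.log_mul (ne_of_gt (Real.exp_pos _)) (ne_of_gt hbc1), Real.log_exp]
      show τ + Real.log (1 + bc K τ) - τ * ∑ r, W r k * H r (k, i) = Ls K τ
      rw [hzk]
      unfold Ls
      ring
    rw [hLsEq]
    unfold ceRisk
    rw [Finset.sum_congr rfl fun k (_ : k ∈ univ) =>
      Finset.sum_congr rfl fun i (_ : i ∈ univ) => hLCEval k i]
    rw [Finset.sum_const, Finset.sum_const, Finset.card_univ, Finset.card_univ,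
      Fintype.card_fin, Fintype.card_fin, nsmul_eq_mul, nsmul_eq_mul]
    field_simp
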